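/- Let f : ℝⁿ → ℝ be a nonnegative function of class C^{1,1}, let L > 0 be a Lipschitz constant for the derivative f', and let σ > 0 be such that f(x + h) ≥ f(x) + f'(x)h + (σ/2)‖h‖² for all x, h ∈ ℝⁿ. Then for every ω > 0 and every r ≥ σ⁻¹·√(2Lω), the sublevel set Ω_ω = {x ∈ ℝⁿ | f(x) ≤ ω} is r-convex. -/
import Mathlib


open Filter Metric Set
open scoped Topology RealInnerProductSpace NNReal

/-- A set `Ω` is `r`-convex if for all `x, y ∈ Ω` the intersection of all closed balls of
radius `r` containing both `x` and `y` (taken to be everything if no such ball exists)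
is contained in `Ω`. -/
def RConvex {n : ℕ} (r : ℝ) (Ω : Set (EuclideanSpace ℝ (Fin n))) : Prop :=
  ∀ x ∈ Ω, ∀ y ∈ Ω,
    {z : EuclideanSpace ℝ (Fin n) |
      ∀ c : EuclideanSpace ℝ (Fin n),
        x ∈ closedBall c r → y ∈ closedBall c r → z ∈ closedBall c r} ⊆ Ω

set_option maxHeartbeats 1000000 in
/-- Descent lemma: a function with `L`-Lipschitz derivative admits a quadratic upper bound. -/
lemma descent_aux {n : ℕ} (f : EuclideanSpace ℝ (Fin n) → ℝ)
    (hdiff : Differentiable ℝ f)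
    (L : ℝ) (hL0 : 0 ≤ L) (hlip : LipschitzWith (Real.toNNReal L) (fderiv ℝ f))
    (x h : EuclideanSpace ℝ (Fin n)) :
    f (x + h) ≤ f x + fderiv ℝ f x h + L / 2 * ‖h‖ ^ 2 := by
  set F : ℝ → ℝ := fun t => (fderiv ℝ f (x + t • h)) h with hFdef
  have hmapc : Continuous fun t : ℝ => x + t • h :=
    continuous_const.add (continuous_id.smul continuous_const)
  have hFc : Continuous F := ((hlip.continuous.comp hmapc).clm_apply continuous_const)
  have hF : ∀ t ∈ Set.uIcc (0:ℝ) 1, HasDerivAt (fun s : ℝ => f (x + s • h)) (F t) t := by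
    intro t _
    have h1 : HasDerivAt (fun s : ℝ => x + s • h) h t := by
      simpa using ((hasDerivAt_id t).smul_const h).const_add x
    exact (hdiff (x + t • h)).hasFDerivAt.comp_hasDerivAt t h1
  have key : ∫ t in (0:ℝ)..1, F t = f (x + (1:ℝ) • h) - f (x + (0:ℝ) • h) :=
    intervalIntegral.integral_eq_sub_of_hasDerivAt hF (hFc.intervalIntegrable 0 1)
  have key' : ∫ t in (0:ℝ)..1, F t = f (x + h) - f x := by
    simpa using key
  have bound : ∀ t ∈ Set.Icc (0:ℝ) 1, F t ≤ fderiv ℝ f x h + (L * ‖h‖ ^ 2) * t := by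
    intro t ht
    have h1 : F t - fderiv ℝ f x h = (fderiv ℝ f (x + t • h) - fderiv ℝ f x) h := by
      simp [hFdef]
    have h2 : (fderiv ℝ f (x + t • h) - fderiv ℝ f x) h
        ≤ ‖fderiv ℝ f (x + t • h) - fderiv ℝ f x‖ * ‖h‖ := by
      calc (fderiv ℝ f (x + t • h) - fderiv ℝ f x) h
          ≤ ‖(fderiv ℝ f (x + t • h) - fderiv ℝ f x) h‖ := le_abs_self _
        _ ≤ ‖fderiv ℝ f (x + t • h) - fderiv ℝ f x‖ * ‖h‖ :=
            (fderiv ℝ f (x + t • h) - fderiv ℝ f x).le_opNorm h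
    have h3 : ‖fderiv ℝ f (x + t • h) - fderiv ℝ f x‖ ≤ L * (t * ‖h‖) := by
      have := hlip.dist_le_mul (x + t • h) x
      rw [dist_eq_norm, dist_eq_norm] at this
      have e1 : x + t • h - x = t • h := by abel
      rw [e1, norm_smul, Real.norm_eq_abs, abs_of_nonneg ht.1,
        Real.coe_toNNReal L hL0] at this
      exact this
    nlinarith [norm_nonneg h, ht.1, h1, h2, h3, sq_nonneg ‖h‖]
  have hcont2 : Continuous fun t : ℝ => fderiv ℝ f x h + (L * ‖h‖ ^ 2) * t :=
    continuous_const.add (continuous_const.mul continuous_id)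
  have int_le : (∫ t in (0:ℝ)..1, F t)
      ≤ ∫ t in (0:ℝ)..1, (fderiv ℝ f x h + (L * ‖h‖ ^ 2) * t) :=
    intervalIntegral.integral_mono_on (by norm_num) (hFc.intervalIntegrable 0 1)
      (hcont2.intervalIntegrable 0 1) bound
  have rhs : (∫ t in (0:ℝ)..1, (fderiv ℝ f x h + (L * ‖h‖ ^ 2) * t))
      = fderiv ℝ f x h + L / 2 * ‖h‖ ^ 2 := by
    have hint2 : IntervalIntegrable (fun t : ℝ => L * ‖h‖ ^ 2 * t)
        MeasureTheory.volume 0 1 :=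
      ((continuous_const.mul continuous_id :
        Continuous fun t : ℝ => L * ‖h‖ ^ 2 * t)).intervalIntegrable 0 1
    rw [intervalIntegral.integral_add intervalIntegrable_const hint2,
      intervalIntegral.integral_const_mul, integral_id]
    simp
    ring
  rw [key'] at int_le
  rw [rhs] at int_le
  linarith

set_option maxHeartbeats 2000000 in
/-- If `f : ℝⁿ → ℝ₊` is `C^{1,1}` with `L`-Lipschitz derivative and strongly convex with
parameter `σ`, then for every `ω > 0` the sublevel set `{x | f x ≤ ω}` is `r`-convex
whenever `r ≥ σ⁻¹ √(2 L ω)`. -/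
theorem sublevel_rConvex_of_strongly_convex {n : ℕ}
    (f : EuclideanSpace ℝ (Fin n) → ℝ) (hf0 : ∀ x, 0 ≤ f x)
    (hdiff : Differentiable ℝ f)
    (L : ℝ) (hL : 0 < L) (hlip : LipschitzWith (Real.toNNReal L) (fderiv ℝ f))
    (σ : ℝ) (hσ : 0 < σ)
    (hsc : ∀ x h : EuclideanSpace ℝ (Fin n),
      f x + fderiv ℝ f x h + σ / 2 * ‖h‖ ^ 2 ≤ f (x + h))
    (ω : ℝ) (hω : 0 < ω) (r : ℝ) (hr : σ⁻¹ * Real.sqrt (2 * L * ω) ≤ r) :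
    RConvex r {x | f x ≤ ω} := by
  have hr0 : 0 ≤ r := le_trans (by positivity) hr
  -- √(2Lω) ≤ σ r
  have hsr : Real.sqrt (2 * L * ω) ≤ σ * r := by
    have := mul_le_mul_of_nonneg_left hr hσ.le
    rwa [← mul_assoc, mul_inv_cancel₀ hσ.ne', one_mul] at this
  set Ω : Set (EuclideanSpace ℝ (Fin n)) := {x | f x ≤ ω} with hΩdef
  -- the sublevel set is convex
  have hconv : Convex ℝ Ω := by
    intro a ha b hb s t hs ht hst
    have hA := hsc (s • a + t • b) (a - (s • a + t • b))
    have hB := hsc (s • a + t • b) (b - (s • a + t • b))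
    rw [add_sub_cancel] at hA hB
    have hzero : s • (a - (s • a + t • b)) + t • (b - (s • a + t • b)) = 0 := by
      have e : s • (a - (s • a + t • b)) + t • (b - (s • a + t • b))
          = (s • a + t • b) - (s + t) • (s • a + t • b) := by module
      rw [e, hst, one_smul, sub_self]
    have hlin : s * (fderiv ℝ f (s • a + t • b) (a - (s • a + t • b)))
        + t * (fderiv ℝ f (s • a + t • b) (b - (s • a + t • b))) = 0 := by
      have := congrArg (fderiv ℝ f (s • a + t • b)) hzero
      rwa [map_add, map_smul, map_smul, map_zero, smul_eq_mul, smul_eq_mul] at this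
    have ha' : f a ≤ ω := ha
    have hb' : f b ≤ ω := hb
    show f (s • a + t • b) ≤ ω
    have h1 := mul_le_mul_of_nonneg_left hA hs
    have h2 := mul_le_mul_of_nonneg_left hB ht
    have h3 := mul_le_mul_of_nonneg_left ha' hs
    have h4 := mul_le_mul_of_nonneg_left hb' ht
    have h5 : 0 ≤ s * (σ / 2 * ‖a - (s • a + t • b)‖ ^ 2) :=
      mul_nonneg hs (by positivity)
    have h6 : 0 ≤ t * (σ / 2 * ‖b - (s • a + t • b)‖ ^ 2) :=
      mul_nonneg ht (by positivity)
    have hm : s * f (s • a + t • b) + t * f (s • a + t • b) = f (s • a + t • b) := by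
      rw [← add_mul, hst, one_mul]
    have h7 : s * ω + t * ω = ω := by rw [← add_mul, hst, one_mul]
    linarith
  have hclosed : IsClosed Ω := isClosed_le hdiff.continuous continuous_const
  intro x hx y hy z hz
  by_contra hfz
  have hfz' : ω < f z := lt_of_not_ge hfz
  -- project z onto Ω
  obtain ⟨p, hpΩ, hpmin⟩ :=
    exists_norm_eq_iInf_of_complete_convex ⟨x, hx⟩ hclosed.isComplete hconv z
  have hproj : ∀ w ∈ Ω, ⟪z - p, w - p⟫ ≤ 0 :=
    (norm_eq_iInf_iff_real_inner_le_zero hconv hpΩ).1 hpmin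
  have hfp : f p ≤ ω := hpΩ
  have hzp : z ≠ p := by
    intro hzq; rw [hzq] at hfz'; exact absurd hfp (not_le.2 hfz')
  have hzpnorm : 0 < ‖z - p‖ := by
    rw [norm_pos_iff, sub_ne_zero]; exact hzp
  -- f p = ω
  have hfpeq : f p = ω := by
    by_contra hne
    have hflt : f p < ω := lt_of_le_of_ne hfp hne
    have hcont : ContinuousAt (fun t : ℝ => f (p + t • (z - p))) 0 :=
      (hdiff.continuous.comp
        (continuous_const.add (continuous_id.smul continuous_const))).continuousAt
    have h0 : (fun t : ℝ => f (p + t • (z - p))) 0 < ω := by simpa using hflt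
    have hev : ∀ᶠ t in 𝓝 (0:ℝ), f (p + t • (z - p)) < ω :=
      hcont.eventually_lt_const h0
    obtain ⟨ε, hε, hball⟩ := Metric.eventually_nhds_iff.1 hev
    set t : ℝ := min (ε / 2) 1 with htdef
    have ht0 : 0 < t := lt_min (by linarith) one_pos
    have htε : dist t (0:ℝ) < ε := by
      rw [Real.dist_eq, sub_zero, abs_of_pos ht0]
      exact lt_of_le_of_lt (min_le_left _ _) (by linarith)
    have hmem : p + t • (z - p) ∈ Ω := le_of_lt (hball htε)
    have := hproj _ hmem
    rw [add_sub_cancel_left, real_inner_smul_right, real_inner_self_eq_norm_sq] at this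
    nlinarith [mul_pos ht0 (pow_pos hzpnorm 2)]
  -- the gradient vector at p
  set g := fderiv ℝ f p with hgdef
  set G : EuclideanSpace ℝ (Fin n) := (InnerProductSpace.toDual ℝ _).symm g with hGdef
  have hGapp : ∀ w, ⟪G, w⟫ = g w := fun w => InnerProductSpace.toDual_symm_apply
  have hGnorm : ‖G‖ = ‖g‖ := LinearIsometryEquiv.norm_map _ g
  by_cases hG0 : G = 0
  · -- gradient zero: Ω = {p}, so x = y = p, and the lens of {p} is {p}
    have hg0 : g = 0 := by
      have := congrArg (InnerProductSpace.toDual ℝ (EuclideanSpace ℝ (Fin n))) hG0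
      simpa [hGdef] using this
    have hsingle : ∀ w ∈ Ω, w = p := by
      intro w hw
      have := hsc p (w - p)
      rw [add_sub_cancel, ← hgdef, hg0] at this
      simp only [ContinuousLinearMap.zero_apply, add_zero] at this
      have hw' : f w ≤ ω := hw
      have hA2 : σ / 2 * ‖w - p‖ ^ 2 ≤ 0 := by linarith
      have hA3 : ‖w - p‖ ^ 2 ≤ 0 := by
        by_contra hpos
        push_neg at hpos
        nlinarith [mul_pos hσ hpos]
      have hA4 : ‖w - p‖ ≤ 0 := by nlinarith [norm_nonneg (w - p)]
      have hA5 : ‖w - p‖ = 0 := le_antisymm hA4 (norm_nonneg _)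
      rw [norm_eq_zero, sub_eq_zero] at hA5
      exact hA5
    have hxp : x = p := hsingle x hx
    have hyp : y = p := hsingle y hy
    -- separating ball: center p + (r/‖z-p‖) • (p - z)
    have hk0 : (0:ℝ) ≤ r * ‖z - p‖⁻¹ :=
      mul_nonneg hr0 (inv_nonneg.2 (norm_nonneg _))
    have hkr : r * ‖z - p‖⁻¹ * ‖z - p‖ = r := by
      field_simp
    have hpc : p ∈ closedBall (p + (r * ‖z - p‖⁻¹) • (p - z)) r := by
      rw [mem_closedBall, dist_eq_norm]
      have he : p - (p + (r * ‖z - p‖⁻¹) • (p - z))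
          = (r * ‖z - p‖⁻¹) • (z - p) := by module
      rw [he, norm_smul, Real.norm_eq_abs, abs_of_nonneg hk0, hkr]
    have hxball : x ∈ closedBall (p + (r * ‖z - p‖⁻¹) • (p - z)) r := by
      rw [hxp]; exact hpc
    have hyball : y ∈ closedBall (p + (r * ‖z - p‖⁻¹) • (p - z)) r := by
      rw [hyp]; exact hpc
    have hzc := hz _ hxball hyball
    rw [mem_closedBall, dist_eq_norm] at hzc
    have he2 : z - (p + (r * ‖z - p‖⁻¹) • (p - z))
        = (1 + r * ‖z - p‖⁻¹) • (z - p) := by module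
    rw [he2, norm_smul, Real.norm_eq_abs,
      abs_of_pos (by linarith : (0:ℝ) < 1 + r * ‖z - p‖⁻¹)] at hzc
    have he3 : (1 + r * ‖z - p‖⁻¹) * ‖z - p‖ = ‖z - p‖ + r := by
      rw [add_mul, one_mul, hkr]
    rw [he3] at hzc
    linarith
  · -- gradient nonzero
    have hGpos : 0 < ‖G‖ := norm_pos_iff.2 hG0
    -- gradient norm bound: ‖G‖² ≤ 2 L ω
    have hdesc := descent_aux f hdiff L hL.le hlip p (-(L⁻¹ • G))
    have hgG : g (-(L⁻¹ • G)) = -(L⁻¹ * ‖G‖ ^ 2) := by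
      rw [map_neg, map_smul, smul_eq_mul, ← hGapp G, real_inner_self_eq_norm_sq]
    have hnG : ‖-(L⁻¹ • G)‖ ^ 2 = L⁻¹ ^ 2 * ‖G‖ ^ 2 := by
      rw [norm_neg, norm_smul, Real.norm_eq_abs, abs_of_pos (inv_pos.2 hL), mul_pow]
    have hLne : L ≠ 0 := hL.ne'
    rw [← hgdef, hgG, hnG] at hdesc
    have e1 : f p + -(L⁻¹ * ‖G‖ ^ 2) + L / 2 * (L⁻¹ ^ 2 * ‖G‖ ^ 2)
        = ω - L⁻¹ * ‖G‖ ^ 2 / 2 := by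
      rw [hfpeq]
      field_simp
      ring
    rw [e1] at hdesc
    have hGsq : ‖G‖ ^ 2 ≤ 2 * L * ω := by
      have h0 := hf0 (p + -(L⁻¹ • G))
      have h1 : L⁻¹ * ‖G‖ ^ 2 ≤ 2 * ω := by linarith
      have h2 := mul_le_mul_of_nonneg_left h1 hL.le
      rw [← mul_assoc, mul_inv_cancel₀ hLne, one_mul] at h2
      linarith
    have hGle : ‖G‖ ≤ σ * r := le_trans (Real.le_sqrt_of_sq_le hGsq) hsr
    -- the auxiliary point p - L⁻¹ G lies in Ω
    have hwmem : p + -(L⁻¹ • G) ∈ Ω := by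
      show f (p + -(L⁻¹ • G)) ≤ ω
      have hpos : 0 ≤ L⁻¹ * ‖G‖ ^ 2 / 2 := by positivity
      linarith
    have hinnerzG : 0 ≤ ⟪z - p, G⟫ := by
      have h1 := hproj _ hwmem
      rw [add_sub_cancel_left, inner_neg_right, real_inner_smul_right] at h1
      nlinarith [inv_pos.2 hL]
    -- the separating-ball center
    set s : ℝ := r / ‖G‖ with hsdef
    have hs0 : 0 ≤ s := div_nonneg hr0 hGpos.le
    have hsG : s * ‖G‖ = r := div_mul_cancel₀ r hGpos.ne'
    have hs1 : 1 ≤ s * σ := by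
      rw [hsdef, div_mul_eq_mul_div, le_div_iff₀ hGpos, one_mul]
      linarith [hGle]
    set c : EuclideanSpace ℝ (Fin n) := p - s • G with hcdef
    have hsGnorm : ‖s • G‖ = r := by
      rw [norm_smul, Real.norm_eq_abs, abs_of_nonneg hs0, hsG]
    have hball : ∀ w ∈ Ω, w ∈ closedBall c r := by
      intro w hw
      have hw' : f w ≤ ω := hw
      have hscw := hsc p (w - p)
      rw [add_sub_cancel] at hscw
      have hinner : ⟪G, w - p⟫ ≤ -(σ / 2 * ‖w - p‖ ^ 2) := by
        rw [hGapp]; linarith [hfpeq]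
      have hexp : w - c = (w - p) + s • G := by rw [hcdef]; module
      have hsq : ‖w - c‖ ^ 2 = ‖w - p‖ ^ 2 + 2 * (s * ⟪w - p, G⟫) + r ^ 2 := by
        rw [hexp, norm_add_sq_real, real_inner_smul_right, hsGnorm]
      have hcomm : ⟪w - p, G⟫ = ⟪G, w - p⟫ := real_inner_comm _ _
      have hkey : ‖w - c‖ ^ 2 ≤ r ^ 2 := by
        rw [hsq, hcomm]
        nlinarith [mul_le_mul_of_nonneg_left hinner hs0,
          mul_nonneg (sq_nonneg ‖w - p‖) (by linarith : (0:ℝ) ≤ s * σ - 1)]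
      rw [mem_closedBall, dist_eq_norm]
      nlinarith [norm_nonneg (w - c)]
    have hzball := hz c (hball x hx) (hball y hy)
    rw [mem_closedBall, dist_eq_norm] at hzball
    have hexpz : z - c = (z - p) + s • G := by rw [hcdef]; module
    have hsqz : ‖z - c‖ ^ 2 = ‖z - p‖ ^ 2 + 2 * (s * ⟪z - p, G⟫) + r ^ 2 := by
      rw [hexpz, norm_add_sq_real, real_inner_smul_right, hsGnorm]
    nlinarith [mul_nonneg hs0 hinnerzG, sq_nonneg ‖z - p‖, norm_nonneg (z - c)]
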